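/- Local Markov property for barriers: in a causally sufficient solvable SCM, for any variable Y not contained in any directed cycle of the union graph, the set B = Pa_union(Y) satisfies Y ⫫ η_C | B for every set C of variables not containing Y, where η_C denotes the exogenous noises of the variables in C. -/
import Mathlib


open scoped Classical

noncomputable def pr {Ω : Type*} [Fintype Ω] (P : Ω → ℝ) (A : Set Ω) : ℝ :=
  ∑ ω, if ω ∈ A then P ω else 0

noncomputable def cpr {Ω : Type*} [Fintype Ω] (P : Ω → ℝ) (A B : Set Ω) : ℝ :=
  pr P (A ∩ B) / pr P B

/-- Factorization lemma: if `T` is insensitive to the `Y`-coordinate, then the event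
`{η Y ∈ S} ∩ T` factors under the product measure. -/
lemma pr_factor {ι : Type*} [Fintype ι] [DecidableEq ι]
    (Noise : ι → Type*) [∀ j, Fintype (Noise j)]
    (p : ∀ j, Noise j → ℝ) (Y : ι) (hsumY : ∑ n, p Y n = 1)
    (S : Set (Noise Y)) (T : Set (∀ j, Noise j))
    (hT : ∀ (η : ∀ j, Noise j) (n : Noise Y), Function.update η Y n ∈ T ↔ η ∈ T) :
    pr (fun η => ∏ j, p j (η j)) ({η | η Y ∈ S} ∩ T)
      = (∑ n, if n ∈ S then p Y n else 0) * pr (fun η => ∏ j, p j (η j)) T := by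
  have hne : Nonempty (Noise Y) := by
    by_contra h
    rw [not_nonempty_iff] at h
    simp at hsumY
  set e := Equiv.piSplitAt Y Noise with he
  set g : Noise Y → (∀ j : { j // j ≠ Y }, Noise j) → (∀ j, Noise j) :=
    fun n r => e.symm (n, r) with hg
  have hgY : ∀ n r, g n r Y = n := by
    intro n r
    simp [hg, he, Equiv.piSplitAt_symm_apply]
  have hgj : ∀ n r (j : ι) (h : j ≠ Y), g n r j = r ⟨j, h⟩ := by
    intro n r j h
    simp [hg, he, Equiv.piSplitAt_symm_apply, h]
  have hupd : ∀ n n' r, Function.update (g n r) Y n' = g n' r := by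
    intro n n' r
    funext j
    by_cases h : j = Y
    · subst h; simp [hgY]
    · simp [Function.update_of_ne h, hgj _ _ _ h]
  have hgT : ∀ n n' r, g n r ∈ T ↔ g n' r ∈ T := by
    intro n n' r
    rw [← hupd n n' r, hT]
  have hprod : ∀ n r, (∏ j, p j (g n r j))
      = p Y n * ∏ j : { j // j ≠ Y }, p j (r j) := by
    intro n r
    rw [Fintype.prod_eq_mul_prod_compl Y]
    congr 1
    · rw [hgY]
    · rw [Finset.prod_subtype (p := fun x => x ≠ Y) ({Y}ᶜ : Finset ι)
        (fun x => by simp) (fun j => p j (g n r j))]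
      exact Finset.prod_congr rfl fun j _ => by rw [hgj _ _ _ j.2]
  obtain ⟨n₀⟩ := hne
  have hsum : ∀ (A : Set (∀ j, Noise j)),
      pr (fun η => ∏ j, p j (η j)) A
        = ∑ n, ∑ r, (if g n r ∈ A then p Y n * ∏ j : { j // j ≠ Y }, p j (r j) else 0) := by
    intro A
    rw [pr, ← Equiv.sum_comp e.symm (fun η => if η ∈ A then ∏ j, p j (η j) else 0),
      Fintype.sum_prod_type]
    refine Finset.sum_congr rfl fun n _ => Finset.sum_congr rfl fun r _ => ?_
    rw [show e.symm (n, r) = g n r from rfl, hprod]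
  rw [hsum, hsum]
  have hL : ∀ n r, (@ite ℝ (g n r ∈ ({η | η Y ∈ S} ∩ T)) (Classical.propDecidable _) (p Y n * ∏ j : { j // j ≠ Y }, p j (r j)) 0)
      = (if n ∈ S then p Y n else 0) * (if g n₀ r ∈ T then ∏ j : { j // j ≠ Y }, p j (r j) else 0) := by
    intro n r
    have : g n r ∈ ({η | η Y ∈ S} ∩ T) ↔ n ∈ S ∧ g n₀ r ∈ T := by
      constructor
      · rintro ⟨h1, h2⟩
        exact ⟨by rwa [Set.mem_setOf_eq, hgY] at h1, (hgT n n₀ r).mp h2⟩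
      · rintro ⟨h1, h2⟩
        exact ⟨by rw [Set.mem_setOf_eq, hgY]; exact h1, (hgT n n₀ r).mpr h2⟩
    by_cases h1 : n ∈ S <;> by_cases h2 : g n₀ r ∈ T
    · rw [if_pos (this.mpr ⟨h1, h2⟩), if_pos h1, if_pos h2]
    · rw [if_neg (fun hh => h2 (this.mp hh).2), if_pos h1, if_neg h2, mul_zero]
    · rw [if_neg (fun hh => h1 (this.mp hh).1), if_neg h1, if_pos h2, zero_mul]
    · rw [if_neg (fun hh => h1 (this.mp hh).1), if_neg h1, zero_mul]
  have hR : ∀ n r, (if g n r ∈ T then p Y n * ∏ j : { j // j ≠ Y }, p j (r j) else 0)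
      = p Y n * (if g n₀ r ∈ T then ∏ j : { j // j ≠ Y }, p j (r j) else 0) := by
    intro n r
    rw [if_congr (hgT n n₀ r) rfl rfl, mul_ite, mul_zero]
  rw [Finset.sum_congr rfl fun n _ => Finset.sum_congr rfl fun r _ => hL n r,
    Finset.sum_congr rfl fun n _ => Finset.sum_congr rfl fun r _ => hR n r]
  simp_rw [← Finset.mul_sum]
  rw [← Finset.sum_mul, ← Finset.sum_mul, Finset.sum_mul, hsumY, one_mul,
    ← Finset.sum_mul, mul_comm]

/-- local Markov property for barriers. In a causally sufficient
(independent noises), solvable SCM, for any variable `Y` not contained in any directed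
cycle of the union graph, the set `B = Pa_union(Y)` is a barrier:
`Y ⫫ η_C | B` for every set `C` of variables with `Y ∉ C`. -/
theorem stmt_9 {ι : Type*} [Fintype ι] [DecidableEq ι]
    (Val : ι → Type*) (Noise : ι → Type*) [∀ j, Fintype (Noise j)]
    (p : ∀ j, Noise j → ℝ)
    (hpos : ∀ (j : ι) (n : Noise j), 0 ≤ p j n) (hsump : ∀ j : ι, ∑ n, p j n = 1)
    (P : (∀ j, Noise j) → ℝ)
    (hP : ∀ η : ∀ j, Noise j, P η = ∏ j, p j (η j))  -- causal sufficiency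
    (Pa : ι → Set ι)  -- union-graph parent sets
    (f : ∀ i : ι, (∀ j, Val j) → Noise i → Val i)
    (F : ∀ i : ι, (∀ j, Noise j) → Val i)
    (hfix : ∀ (i : ι) (η : ∀ j, Noise j), F i η = f i (fun j => F j η) (η i))
    (hpa : ∀ (i : ι) (v v' : ∀ j, Val j) (n : Noise i),
      (∀ j ∈ Pa i, v j = v' j) → f i v n = f i v' n)
    (hanc : ∀ (i : ι) (η η' : ∀ j, Noise j),  -- solvability: F i depends on ancestors
      (∀ j : ι, Relation.ReflTransGen (fun a b => a ∈ Pa b) j i → η j = η' j) →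
      F i η = F i η')
    (Y : ι) (hnocyc : ¬ Relation.TransGen (fun a b => a ∈ Pa b) Y Y) :
    ∀ C : Set ι, Y ∉ C →
      ∀ (b : ∀ j, Val j) (y : Val Y) (c : ∀ j, Noise j),
        pr P {η | ∀ j ∈ Pa Y, F j η = b j} ≠ 0 →
        cpr P ({η | F Y η = y} ∩ {η | ∀ j ∈ C, η j = c j}) {η | ∀ j ∈ Pa Y, F j η = b j}
          = cpr P {η | F Y η = y} {η | ∀ j ∈ Pa Y, F j η = b j}
            * cpr P {η | ∀ j ∈ C, η j = c j} {η | ∀ j ∈ Pa Y, F j η = b j} := by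
  intro C hYC b y c hEne
  have hPfun : P = fun η => ∏ j, p j (η j) := funext hP
  subst hPfun
  set E : Set (∀ j, Noise j) := {η | ∀ j ∈ Pa Y, F j η = b j} with hE
  set D : Set (∀ j, Noise j) := {η | ∀ j ∈ C, η j = c j} with hD
  set S : Set (Noise Y) := {n | f Y b n = y} with hS
  -- F j (update η Y n) = F j η for j ∈ Pa Y: Y is not an ancestor of a parent of Y
  have hFupd : ∀ (j : ι), j ∈ Pa Y → ∀ (η : ∀ k, Noise k) (n : Noise Y),
      F j (Function.update η Y n) = F j η := by
    intro j hj η n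
    apply hanc
    intro k hk
    have hkY : k ≠ Y := by
      rintro rfl
      exact hnocyc (Relation.TransGen.tail' hk hj)
    rw [Function.update_of_ne hkY]
  have hEupd : ∀ (η : ∀ k, Noise k) (n : Noise Y),
      Function.update η Y n ∈ E ↔ η ∈ E := by
    intro η n
    simp only [hE, Set.mem_setOf_eq]
    constructor
    · intro h j hj; rw [← hFupd j hj η n]; exact h j hj
    · intro h j hj; rw [hFupd j hj η n]; exact h j hj
  have hDupd : ∀ (η : ∀ k, Noise k) (n : Noise Y),
      Function.update η Y n ∈ D ↔ η ∈ D := by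
    intro η n
    simp only [hD, Set.mem_setOf_eq]
    constructor
    · intro h j hj
      have hjY : j ≠ Y := fun hh => hYC (hh ▸ hj)
      rw [← Function.update_of_ne hjY n η]; exact h j hj
    · intro h j hj
      have hjY : j ≠ Y := fun hh => hYC (hh ▸ hj)
      rw [Function.update_of_ne hjY n η]; exact h j hj
  -- On E, the event {F Y = y} coincides with {η Y ∈ S}
  have hFY : ∀ (A : Set (∀ k, Noise k)),
      ({η | F Y η = y} ∩ (A ∩ E)) = ({η | η Y ∈ S} ∩ (A ∩ E)) := by
    intro A
    ext η
    simp only [Set.mem_inter_iff, Set.mem_setOf_eq, hS, hE]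
    constructor
    · rintro ⟨h1, h2, h3⟩
      refine ⟨?_, h2, h3⟩
      rw [← h1, hfix Y η]
      exact (hpa Y _ b (η Y) (fun j hj => h3 j hj)).symm
    · rintro ⟨h1, h2, h3⟩
      refine ⟨?_, h2, h3⟩
      rw [hfix Y η, hpa Y _ b (η Y) (fun j hj => h3 j hj)]
      exact h1
  set q : ℝ := ∑ n, if n ∈ S then p Y n else 0 with hq
  have hDE : ∀ (η : ∀ k, Noise k) (n : Noise Y),
      Function.update η Y n ∈ D ∩ E ↔ η ∈ D ∩ E := by
    intro η n
    simp only [Set.mem_inter_iff, hDupd, hEupd]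
  have key1 : pr (fun η => ∏ j, p j (η j)) ({η | F Y η = y} ∩ (D ∩ E))
      = q * pr (fun η => ∏ j, p j (η j)) (D ∩ E) := by
    rw [hFY D]
    exact pr_factor Noise p Y (hsump Y) S (D ∩ E) hDE
  have key2 : pr (fun η => ∏ j, p j (η j)) ({η | F Y η = y} ∩ E)
      = q * pr (fun η => ∏ j, p j (η j)) E := by
    have := hFY Set.univ
    rw [Set.univ_inter] at this
    rw [this]
    exact pr_factor Noise p Y (hsump Y) S E hEupd
  have hassoc : ({η | F Y η = y} ∩ D) ∩ E = {η | F Y η = y} ∩ (D ∩ E) := by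
    rw [Set.inter_assoc]
  rw [cpr, cpr, cpr, hassoc, key1, key2]
  field_simp
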